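/- Let α > −1/2, β ∈ ℝ, let w be the normalized pure Fisher–Hartwig weight with parameters α, β, and let (φ_n) be a system of orthonormal polynomials for w. Then for every n ≥ 0, (α + iβ + n + 1)·k_n·φ_{n+1}(0) = (α − iβ + n)·k_{n+1}·φ_n(0); equivalently, r_{n+1}·(α + iβ + n + 1) = r_n·(α − iβ + n). -/

import Mathlib

open Complex Polynomial MeasureTheory intervalIntegral Set

noncomputable def uc (θ : ℝ) : ℂ := Complex.exp (θ * Complex.I)

noncomputable def starRev (p : Polynomial ℂ) : Polynomial ℂ :=
  (p.map (starRingEnd ℂ)).reverse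

noncomputable def kC (φ : ℕ → Polynomial ℂ) (n : ℕ) : ℂ := (φ n).leadingCoeff

noncomputable def rC (φ : ℕ → Polynomial ℂ) (n : ℕ) : ℂ := (φ n).coeff 0 / kC φ n

noncomputable def mC (φ : ℕ → Polynomial ℂ) (n : ℕ) : ℂ := kC φ n / kC φ (n+1)

noncomputable def sC (φ : ℕ → Polynomial ℂ) (n : ℕ) : ℂ := rC φ (n+1) / rC φ n

/-- A system of orthonormal polynomials on the unit circle for the weight `w`:
degree of `φ n` is `n`, leading coefficient real and positive, orthonormality. -/
def OPS (w : ℝ → ℂ) (φ : ℕ → Polynomial ℂ) : Prop :=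
  (∀ n : ℕ, (φ n).degree = n) ∧
  (∀ n : ℕ, ∃ c : ℝ, 0 < c ∧ (φ n).leadingCoeff = (c : ℂ)) ∧
  (∀ m n : ℕ, (∫ θ in (0:ℝ)..(2 * Real.pi),
      (φ m).eval (uc θ) * (starRingEnd ℂ) ((φ n).eval (uc θ)) * w θ)
    = if m = n then 1 else 0)

/-- Normalisation constant of the pure Fisher-Hartwig weight. -/
noncomputable def FHC (α β : ℝ) : ℂ :=
  Complex.Gamma (1 + (α : ℂ) + (β : ℂ) * Complex.I) *
    Complex.Gamma (1 + (α : ℂ) - (β : ℂ) * Complex.I) /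
    (2 * (Real.pi : ℂ) * Complex.Gamma (1 + 2 * (α : ℂ)))

/-- The normalized pure Fisher-Hartwig weight on the unit circle. -/
noncomputable def FHw (α β : ℝ) (θ : ℝ) : ℂ :=
  FHC α β * (((2 * Real.sin (θ / 2)) ^ (2 * α) : ℝ) : ℂ) *
    ((Real.exp (-β * (θ - Real.pi)) : ℝ) : ℂ)

lemma sin_lb {x : ℝ} (h0 : 0 ≤ x) (h1 : x ≤ Real.pi / 2) : (2/5) * x ≤ Real.sin x := by
  calc (2/5) * x ≤ 2 / Real.pi * x := by
        apply mul_le_mul_of_nonneg_right _ h0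
        have := Real.pi_lt_d2
        rw [div_le_div_iff₀ (by norm_num) Real.pi_pos]
        nlinarith
    _ ≤ Real.sin x := Real.mul_le_sin h0 h1

lemma FHw_integrable (α β : ℝ) (hα : -(1/2:ℝ) < α) :
    IntervalIntegrable (FHw α β) volume 0 (2*Real.pi) := by
  have h2π : (0:ℝ) ≤ 2 * Real.pi := by positivity
  have hA0 : (0:ℝ) < (2:ℝ)^(2*α) + ((2:ℝ)/5)^(2*α) := by positivity
  set A : ℝ := (2:ℝ)^(2*α) + ((2:ℝ)/5)^(2*α) with hA
  have hg : IntervalIntegrable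
      (fun θ : ℝ => (‖FHC α β‖ * Real.exp (|β| * Real.pi) * A) *
        (θ ^ (2*α) + (2*Real.pi - θ) ^ (2*α))) volume 0 (2*Real.pi) := by
    apply IntervalIntegrable.const_mul
    apply IntervalIntegrable.add
    · exact intervalIntegrable_rpow' (by linarith)
    · have := (intervalIntegrable_rpow' (r := 2*α) (by linarith)
        (a := 0) (b := 2*Real.pi)).comp_sub_left (2*Real.pi)
      simpa using this.symm
  apply hg.mono_fun
  · apply Measurable.aestronglyMeasurable
    apply Measurable.mul
    apply Measurable.mul measurable_const
    · exact (Complex.measurable_ofReal.comp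
        ((measurable_const.mul (Real.measurable_sin.comp (measurable_id.div_const 2))).pow
          measurable_const))
    · exact Complex.measurable_ofReal.comp
        ((measurable_const.mul ((measurable_id.sub_const Real.pi))).exp)
  · rw [Filter.EventuallyLE, ae_restrict_iff' measurableSet_uIoc]
    apply Filter.Eventually.of_forall
    intro θ hθ
    rw [Set.uIoc_of_le h2π] at hθ
    obtain ⟨hθ0, hθ2⟩ := hθ
    have hsin0 : 0 ≤ Real.sin (θ/2) := by
      apply Real.sin_nonneg_of_nonneg_of_le_pi <;> nlinarith
    have hbase0 : (0:ℝ) ≤ 2 * Real.sin (θ/2) := by linarith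
    -- key bound on the rpow factor
    have key : (2 * Real.sin (θ/2)) ^ (2*α) ≤ A * (θ ^ (2*α) + (2*Real.pi - θ) ^ (2*α)) := by
      rcases le_or_gt 0 (2*α) with hc | hc
      · -- nonnegative exponent
        have h1 : (2 * Real.sin (θ/2)) ^ (2*α) ≤ (2:ℝ) ^ (2*α) := by
          apply Real.rpow_le_rpow hbase0 _ hc
          nlinarith [Real.sin_le_one (θ/2)]
        have h2 : (1:ℝ) ≤ θ ^ (2*α) + (2*Real.pi - θ) ^ (2*α) := by
          rcases le_or_gt θ Real.pi with h | h
          · have : (1:ℝ) ≤ (2*Real.pi - θ) ^ (2*α) := by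
              have h1 : ((1:ℝ)) ^ (2*α) ≤ (2*Real.pi - θ) ^ (2*α) :=
                Real.rpow_le_rpow (by norm_num) (by nlinarith [Real.pi_gt_three]) hc
              simpa using h1
            nlinarith [Real.rpow_nonneg hθ0.le (2*α)]
          · have : (1:ℝ) ≤ θ ^ (2*α) := by
              have h1 : ((1:ℝ)) ^ (2*α) ≤ θ ^ (2*α) :=
                Real.rpow_le_rpow (by norm_num) (by nlinarith [Real.pi_gt_three]) hc
              simpa using h1
            nlinarith [Real.rpow_nonneg (x := 2*Real.pi - θ) (by linarith) (2*α)]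
        calc (2 * Real.sin (θ/2)) ^ (2*α) ≤ (2:ℝ)^(2*α) * 1 := by simpa using h1
          _ ≤ A * (θ ^ (2*α) + (2*Real.pi - θ) ^ (2*α)) := by
              apply mul_le_mul _ h2 (by norm_num) hA0.le
              rw [hA]
              nlinarith [Real.rpow_nonneg (x := (2:ℝ)/5) (by norm_num) (2*α)]
      · -- negative exponent
        rcases eq_or_lt_of_le hθ2 with rfl | hθ2'
        · rw [show (2*Real.pi)/2 = Real.pi by ring, Real.sin_pi, mul_zero,
            Real.zero_rpow (by linarith)]
          exact mul_nonneg hA0.le (add_nonneg (Real.rpow_nonneg (by positivity) _)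
            (Real.rpow_nonneg (by linarith) _))
        rcases le_or_gt θ Real.pi with h | h
        · have hlb : (2/5) * θ ≤ 2 * Real.sin (θ/2) := by
            have := sin_lb (x := θ/2) (by linarith) (by linarith)
            linarith
          have h1 : (2 * Real.sin (θ/2)) ^ (2*α) ≤ ((2/5) * θ) ^ (2*α) :=
            Real.rpow_le_rpow_of_nonpos (mul_pos (by norm_num) hθ0) hlb hc.le
          have h2 : ((2/5) * θ) ^ (2*α) = ((2:ℝ)/5)^(2*α) * θ ^ (2*α) :=
            Real.mul_rpow (by norm_num) hθ0.le
          have h3 : ((2:ℝ)/5)^(2*α) * θ ^ (2*α) ≤ A * (θ ^ (2*α) + (2*Real.pi - θ) ^ (2*α)) := by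
            have t1 : (0:ℝ) ≤ θ ^ (2*α) := Real.rpow_nonneg hθ0.le _
            have t2 : (0:ℝ) ≤ (2*Real.pi - θ) ^ (2*α) := Real.rpow_nonneg (by linarith) _
            have t3 : (0:ℝ) ≤ (2:ℝ)^(2*α) := Real.rpow_nonneg (by norm_num) _
            nlinarith [Real.rpow_nonneg (x := (2:ℝ)/5) (by norm_num) (2*α)]
          linarith [h1.trans_eq h2]
        · have hsin : Real.sin (θ/2) = Real.sin ((2*Real.pi - θ)/2) := by
            rw [show (2*Real.pi - θ)/2 = Real.pi - θ/2 by ring, Real.sin_pi_sub]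
          have hlb : (2/5) * (2*Real.pi - θ) ≤ 2 * Real.sin (θ/2) := by
            rw [hsin]
            have := sin_lb (x := (2*Real.pi - θ)/2) (by linarith) (by linarith)
            linarith
          have h1 : (2 * Real.sin (θ/2)) ^ (2*α) ≤ ((2/5) * (2*Real.pi - θ)) ^ (2*α) :=
            Real.rpow_le_rpow_of_nonpos (mul_pos (by norm_num) (by linarith)) hlb hc.le
          have h2 : ((2/5) * (2*Real.pi - θ)) ^ (2*α)
              = ((2:ℝ)/5)^(2*α) * (2*Real.pi - θ) ^ (2*α) :=
            Real.mul_rpow (by norm_num) (by linarith)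
          have h3 : ((2:ℝ)/5)^(2*α) * (2*Real.pi - θ) ^ (2*α)
              ≤ A * (θ ^ (2*α) + (2*Real.pi - θ) ^ (2*α)) := by
            have t1 : (0:ℝ) ≤ θ ^ (2*α) := Real.rpow_nonneg hθ0.le _
            have t2 : (0:ℝ) ≤ (2*Real.pi - θ) ^ (2*α) := Real.rpow_nonneg (by linarith) _
            have t3 : (0:ℝ) ≤ (2:ℝ)^(2*α) := Real.rpow_nonneg (by norm_num) _
            nlinarith [Real.rpow_nonneg (x := (2:ℝ)/5) (by norm_num) (2*α)]
          linarith [h1.trans_eq h2]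
    -- assemble norm bound
    have hrpow0 : (0:ℝ) ≤ (2 * Real.sin (θ/2)) ^ (2*α) := Real.rpow_nonneg hbase0 _
    have hexp : Real.exp (-β * (θ - Real.pi)) ≤ Real.exp (|β| * Real.pi) := by
      apply Real.exp_le_exp.mpr
      have h1 : -β * (θ - Real.pi) ≤ |(-β) * (θ - Real.pi)| := le_abs_self _
      rw [abs_mul, abs_neg] at h1
      have h2 : |θ - Real.pi| ≤ Real.pi := by
        rw [abs_le]; constructor <;> linarith
      calc -β * (θ - Real.pi) ≤ |β| * |θ - Real.pi| := h1
        _ ≤ |β| * Real.pi := by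
          apply mul_le_mul_of_nonneg_left h2 (abs_nonneg _)
    show ‖FHw α β θ‖ ≤ _
    rw [FHw]
    rw [norm_mul, norm_mul]
    simp only [Complex.norm_real, Real.norm_eq_abs]
    rw [_root_.abs_of_nonneg hrpow0, _root_.abs_of_nonneg (Real.exp_pos _).le]
    calc ‖FHC α β‖ * (2 * Real.sin (θ/2)) ^ (2*α) * Real.exp (-β * (θ - Real.pi))
        ≤ ‖FHC α β‖ * (A * (θ ^ (2*α) + (2*Real.pi - θ) ^ (2*α))) * Real.exp (|β| * Real.pi) := by
          apply mul_le_mul _ hexp (Real.exp_pos _).le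
          · apply mul_nonneg (by positivity)
            have t1 : (0:ℝ) ≤ θ ^ (2*α) := Real.rpow_nonneg hθ0.le _
            have t2 : (0:ℝ) ≤ (2*Real.pi - θ) ^ (2*α) := Real.rpow_nonneg (by linarith) _
            positivity
          · exact mul_le_mul_of_nonneg_left key (norm_nonneg _)
      _ = ‖FHC α β‖ * Real.exp (|β| * Real.pi) * A * (θ ^ (2*α) + (2*Real.pi - θ) ^ (2*α)) := by
          ring
      _ ≤ ‖(‖FHC α β‖ * Real.exp (|β| * Real.pi) * A *
            (θ ^ (2*α) + (2*Real.pi - θ) ^ (2*α)))‖ := le_abs_self _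

lemma uc_cont : Continuous uc :=
  Complex.continuous_exp.comp ((Complex.continuous_ofReal).mul continuous_const)

lemma uc_ne_zero (θ : ℝ) : uc θ ≠ 0 := Complex.exp_ne_zero _

lemma uc_mul_conj (θ : ℝ) : uc θ * (starRingEnd ℂ) (uc θ) = 1 := by
  rw [uc, ← Complex.exp_conj]
  rw [← Complex.exp_add]
  simp [Complex.conj_ofReal]

noncomputable def Inn (α β : ℝ) (p q : Polynomial ℂ) : ℂ :=
  ∫ θ in (0:ℝ)..(2*Real.pi), p.eval (uc θ) * (starRingEnd ℂ) (q.eval (uc θ)) * FHw α β θ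

lemma master (α β : ℝ) (hα : -(1/2:ℝ) < α) (g : ℝ → ℂ) (hg : Continuous g) :
    IntervalIntegrable (fun θ => g θ * FHw α β θ) volume 0 (2*Real.pi) :=
  (FHw_integrable α β hα).continuousOn_mul hg.continuousOn

lemma cont_eval (p : Polynomial ℂ) : Continuous (fun θ => p.eval (uc θ)) :=
  p.continuous.comp uc_cont

lemma cont_conj_eval (q : Polynomial ℂ) :
    Continuous (fun θ => (starRingEnd ℂ) (q.eval (uc θ))) :=
  continuous_conj.comp (cont_eval q)

lemma innInt (α β : ℝ) (hα : -(1/2:ℝ) < α) (p q : Polynomial ℂ) :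
    IntervalIntegrable
      (fun θ => p.eval (uc θ) * (starRingEnd ℂ) (q.eval (uc θ)) * FHw α β θ)
      volume 0 (2*Real.pi) :=
  master α β hα _ ((cont_eval p).mul (cont_conj_eval q))

lemma Inn_sum_left (α β : ℝ) (hα : -(1/2:ℝ) < α) {ι : Type*} (s : Finset ι)
    (f : ι → Polynomial ℂ) (q : Polynomial ℂ) :
    Inn α β (∑ i ∈ s, f i) q = ∑ i ∈ s, Inn α β (f i) q := by
  unfold Inn
  rw [← intervalIntegral.integral_finset_sum (fun i _ => innInt α β hα (f i) q)]
  apply intervalIntegral.integral_congr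
  intro θ _
  simp only [Polynomial.eval_finset_sum]
  rw [Finset.sum_mul, Finset.sum_mul]

lemma Inn_Cmul_left (α β : ℝ) (a : ℂ) (p q : Polynomial ℂ) :
    Inn α β (Polynomial.C a * p) q = a * Inn α β p q := by
  unfold Inn
  rw [← intervalIntegral.integral_const_mul]
  apply intervalIntegral.integral_congr
  intro θ _
  simp only [Polynomial.eval_mul, Polynomial.eval_C]
  ring

lemma Inn_Cmul_right (α β : ℝ) (a : ℂ) (p q : Polynomial ℂ) :
    Inn α β p (Polynomial.C a * q) = (starRingEnd ℂ) a * Inn α β p q := by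
  unfold Inn
  rw [← intervalIntegral.integral_const_mul]
  apply intervalIntegral.integral_congr
  intro θ _
  simp only [Polynomial.eval_mul, Polynomial.eval_C, map_mul]
  ring

lemma Inn_sum_right (α β : ℝ) (hα : -(1/2:ℝ) < α) {ι : Type*} (s : Finset ι)
    (f : ι → Polynomial ℂ) (p : Polynomial ℂ) :
    Inn α β p (∑ i ∈ s, f i) = ∑ i ∈ s, Inn α β p (f i) := by
  unfold Inn
  rw [← intervalIntegral.integral_finset_sum (fun i _ => innInt α β hα p (f i))]
  apply intervalIntegral.integral_congr
  intro θ _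
  simp only [Polynomial.eval_finset_sum, map_sum]
  rw [Finset.mul_sum, Finset.sum_mul]

lemma Inn_add_left (α β : ℝ) (hα : -(1/2:ℝ) < α) (p₁ p₂ q : Polynomial ℂ) :
    Inn α β (p₁ + p₂) q = Inn α β p₁ q + Inn α β p₂ q := by
  unfold Inn
  rw [← intervalIntegral.integral_add (innInt α β hα p₁ q) (innInt α β hα p₂ q)]
  apply intervalIntegral.integral_congr
  intro θ _
  simp only [Polynomial.eval_add]
  ring

lemma Inn_shift (α β : ℝ) (p : Polynomial ℂ) (j : ℕ) :
    Inn α β (Polynomial.X * p) (Polynomial.X ^ (j+1)) = Inn α β p (Polynomial.X ^ j) := by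
  unfold Inn
  apply intervalIntegral.integral_congr
  intro θ _
  simp only [Polynomial.eval_mul, Polynomial.eval_pow, Polynomial.eval_X, map_pow, map_mul]
  have h := uc_mul_conj θ
  have : uc θ * eval (uc θ) p * ((starRingEnd ℂ) (uc θ) * (starRingEnd ℂ) (uc θ) ^ j)
      = eval (uc θ) p * (starRingEnd ℂ) (uc θ) ^ j * (uc θ * (starRingEnd ℂ) (uc θ)) := by ring
  rw [pow_succ']
  rw [this, h, mul_one]

noncomputable def kC' (φ : ℕ → Polynomial ℂ) (n : ℕ) : ℂ := (φ n).leadingCoeff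

section Algebra

variable {φ : ℕ → Polynomial ℂ}

lemma phi_ne_zero (hdeg : ∀ n, (φ n).degree = n) (n : ℕ) : φ n ≠ 0 := by
  intro h
  have := hdeg n
  rw [h, Polynomial.degree_zero] at this
  exact (by simp at this)

lemma phi_natDegree (hdeg : ∀ n, (φ n).degree = n) (n : ℕ) : (φ n).natDegree = n :=
  Polynomial.natDegree_eq_of_degree_eq_some (hdeg n)

lemma kC'_ne_zero (hdeg : ∀ n, (φ n).degree = n) (n : ℕ) : kC' φ n ≠ 0 :=
  Polynomial.leadingCoeff_ne_zero.mpr (phi_ne_zero hdeg n)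

lemma coeff_phi_self (hdeg : ∀ n, (φ n).degree = n) (n : ℕ) :
    (φ n).coeff n = kC' φ n := by
  rw [kC', Polynomial.leadingCoeff, phi_natDegree hdeg]

lemma coeff_phi_gt (hdeg : ∀ n, (φ n).degree = n) {m n : ℕ} (h : n < m) :
    (φ n).coeff m = 0 := by
  apply Polynomial.coeff_eq_zero_of_degree_lt
  rw [hdeg n]
  exact_mod_cast h

lemma span_rep (hdeg : ∀ n, (φ n).degree = n) :
    ∀ (N : ℕ) (p : Polynomial ℂ), p.degree ≤ N →
      ∃ c : ℕ → ℂ, p = ∑ i ∈ Finset.range (N+1), Polynomial.C (c i) * φ i := by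
  intro N
  induction N with
  | zero =>
    intro p hp
    refine ⟨fun _ => p.coeff 0 / kC' φ 0, ?_⟩
    have h0 : φ 0 = Polynomial.C (kC' φ 0) := by
      rw [Polynomial.eq_C_of_degree_le_zero (le_of_eq (hdeg 0)), ← coeff_phi_self hdeg]
    rw [Finset.sum_range_one, h0, ← Polynomial.C_mul,
      div_mul_cancel₀ _ (kC'_ne_zero hdeg 0)]
    exact Polynomial.eq_C_of_degree_le_zero (by exact_mod_cast hp)
  | succ N ih =>
    intro p hp
    set a : ℂ := p.coeff (N+1) / kC' φ (N+1) with ha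
    have hq : (p - Polynomial.C a * φ (N+1)).degree ≤ N := by
      apply Polynomial.degree_le_iff_coeff_zero _ _ |>.mpr
      intro m hm
      have hm' : N < m := by exact_mod_cast hm
      rw [Polynomial.coeff_sub, Polynomial.coeff_C_mul]
      rcases eq_or_lt_of_le (Nat.succ_le_of_lt hm') with rfl | hm2
      · rw [coeff_phi_self hdeg, ha, div_mul_cancel₀ _ (kC'_ne_zero hdeg _), sub_self]
      · rw [coeff_phi_gt hdeg hm2, Polynomial.coeff_eq_zero_of_degree_lt, mul_zero,
          sub_zero]
        exact lt_of_le_of_lt hp (by exact_mod_cast hm2)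
    obtain ⟨c, hc⟩ := ih _ hq
    refine ⟨fun i => if i = N+1 then a else c i, ?_⟩
    rw [Finset.sum_range_succ]
    simp only [if_pos rfl, if_true]
    have : ∑ i ∈ Finset.range (N+1),
        Polynomial.C (if i = N+1 then a else c i) * φ i
        = ∑ i ∈ Finset.range (N+1), Polynomial.C (c i) * φ i := by
      apply Finset.sum_congr rfl
      intro i hi
      have := Finset.mem_range.mp hi
      rw [if_neg (by omega)]
    rw [this, ← hc]
    ring

lemma rep_coeff_top (hdeg : ∀ n, (φ n).degree = n) {N : ℕ} {p : Polynomial ℂ} {c : ℕ → ℂ}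
    (h : p = ∑ i ∈ Finset.range (N+1), Polynomial.C (c i) * φ i) :
    p.coeff N = c N * kC' φ N := by
  rw [h, Polynomial.finset_sum_coeff]
  rw [Finset.sum_eq_single N]
  · rw [Polynomial.coeff_C_mul, coeff_phi_self hdeg]
  · intro i hi hne
    have : i < N := by
      have := Finset.mem_range.mp hi
      omega
    rw [Polynomial.coeff_C_mul, coeff_phi_gt hdeg this, mul_zero]
  · intro h
    exact absurd (Finset.self_mem_range_succ N) h

end Algebra

lemma key_ident (αc βc J F W pz pz' u v Eβ Eπ : ℂ) (hu : u ≠ 0) :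
    Complex.I * F * Eπ *
      (((((1:ℂ)/2 - J)*Complex.I - βc) * (u*v*Eβ) * pz
          + (u*v*Eβ) * (pz' * (Complex.I * u^2))) * (W * ((u⁻¹ - u)*Complex.I))
        + (u*v*Eβ) * pz * ((2*αc+1) * W * ((u + u⁻¹)/2)))
    = Complex.I * v * (((u^2)^2 - u^2) * pz'
        + ((αc + βc*Complex.I + 1 - J)*u^2 + (αc - βc*Complex.I + J)) * pz)
      * (F * W * (Eβ * Eπ)) := by
  have h3 : (Complex.I)^3 = -Complex.I := by
    rw [pow_succ, Complex.I_sq]; ring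
  field_simp
  ring_nf
  simp only [h3, Complex.I_sq]
  ring

lemma hasDerivAt_cexp_mul (c : ℂ) (θ : ℂ) :
    HasDerivAt (fun z : ℂ => Complex.exp (c * z)) (c * Complex.exp (c * θ)) θ := by
  have h := (Complex.hasDerivAt_exp (c*θ)).comp θ ((hasDerivAt_id θ).const_mul c)
  simpa [Function.comp_def, mul_comm] using h

-- derivative of the weight-with-(z-1) antiderivative
lemma hasDerivAt_H (α β : ℝ) (P : Polynomial ℂ) (j : ℕ) (θ : ℝ)
    (hθ : θ ∈ Set.Ioo 0 (2*Real.pi)) :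
    HasDerivAt
      (fun t : ℝ => (Complex.I * FHC α β * Complex.exp ((β:ℂ) * (Real.pi:ℂ))) *
        ((Complex.exp ((((1:ℂ)/2 - j) * Complex.I - β) * t) *
            P.eval (Complex.exp (Complex.I * t))) *
          (((2 * Real.sin (t/2)) ^ (2*α+1) : ℝ) : ℂ)))
      ((Complex.I * Complex.exp (-(j:ℂ) * θ * Complex.I) *
        (((Polynomial.X^2 - Polynomial.X) * P.derivative
          + (Polynomial.C ((α:ℂ) + β*Complex.I + 1 - (j:ℂ)) * Polynomial.X
              + Polynomial.C ((α:ℂ) - β*Complex.I + (j:ℂ))) * P).eval (uc θ)))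
        * FHw α β θ) θ := by
  obtain ⟨hθ0, hθ2⟩ := hθ
  set c : ℂ := ((1:ℂ)/2 - j) * Complex.I - β with hc
  have hs : 0 < Real.sin (θ/2) := by
    apply Real.sin_pos_of_pos_of_lt_pi <;> [linarith; linarith]
  have hb : (0:ℝ) < 2 * Real.sin (θ/2) := by linarith
  -- derivative of complex-analytic part
  have hg : HasDerivAt (fun z : ℂ => Complex.exp (c * z) * P.eval (Complex.exp (Complex.I * z)))
      (c * Complex.exp (c * θ) * P.eval (Complex.exp (Complex.I * θ))
        + Complex.exp (c * θ) *
          (P.derivative.eval (Complex.exp (Complex.I * θ)) *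
            (Complex.I * Complex.exp (Complex.I * θ)))) (θ:ℂ) := by
    have h1 := (P.hasDerivAt (Complex.exp (Complex.I * (θ:ℂ)))).comp (θ:ℂ)
      (hasDerivAt_cexp_mul Complex.I (θ:ℂ))
    have h2 := (hasDerivAt_cexp_mul c (θ:ℂ)).mul h1
    simpa [Function.comp_def, Pi.mul_def, mul_comm, mul_assoc, mul_left_comm] using h2
  have hgR : HasDerivAt (fun t : ℝ => Complex.exp (c * t) * P.eval (Complex.exp (Complex.I * t)))
      (c * Complex.exp (c * θ) * P.eval (Complex.exp (Complex.I * θ))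
        + Complex.exp (c * θ) *
          (P.derivative.eval (Complex.exp (Complex.I * θ)) *
            (Complex.I * Complex.exp (Complex.I * θ)))) θ := hg.comp_ofReal
  -- derivative of the rpow part
  have hbase : HasDerivAt (fun t : ℝ => 2 * Real.sin (t/2)) (Real.cos (θ/2)) θ := by
    have h1 := (Real.hasDerivAt_sin (θ/2)).comp θ ((hasDerivAt_id θ).div_const 2)
    have h2 := h1.const_mul (2:ℝ)
    have h3 : HasDerivAt (fun t : ℝ => 2 * Real.sin (t/2)) (2*(Real.cos (θ/2) * 2⁻¹)) θ := by
      simpa [Function.comp] using h2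
    convert h3 using 1
    ring
  have hR : HasDerivAt (fun t : ℝ => (2 * Real.sin (t/2)) ^ (2*α+1))
      ((2*α+1) * (2 * Real.sin (θ/2)) ^ (2*α) * Real.cos (θ/2)) θ := by
    have h1 := (Real.hasDerivAt_rpow_const (x := 2 * Real.sin (θ/2)) (p := 2*α+1)
      (Or.inl hb.ne')).comp θ hbase
    have : (2*α+1) * (2 * Real.sin (θ/2)) ^ (2*α+1-1) = (2*α+1) * (2 * Real.sin (θ/2)) ^ (2*α) := by
      norm_num
    simpa [Function.comp_def, this, mul_assoc] using h1
  have hRC : HasDerivAt (fun t : ℝ => ((((2 * Real.sin (t/2)) ^ (2*α+1) : ℝ)) : ℂ))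
      ((((2*α+1) * (2 * Real.sin (θ/2)) ^ (2*α) * Real.cos (θ/2) : ℝ)) : ℂ) θ := hR.ofReal_comp
  have hprod := (hgR.mul hRC).const_mul (Complex.I * FHC α β * Complex.exp ((β:ℂ) * (Real.pi:ℂ)))
  convert hprod using 1
  case e'_4 => rfl
  case e'_8 => rfl
  -- now the algebraic identity
  set u : ℂ := Complex.exp ((θ:ℂ)/2 * Complex.I) with hu_def
  have hu : u ≠ 0 := Complex.exp_ne_zero _
  set v : ℂ := Complex.exp (-(j:ℂ) * θ * Complex.I) with hv_def
  set Eβ : ℂ := Complex.exp (-(β:ℂ) * θ) with hEβ_def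
  set Eπ : ℂ := Complex.exp ((β:ℂ) * (Real.pi:ℂ)) with hEπ_def
  have hz : Complex.exp (Complex.I * (θ:ℂ)) = u^2 := by
    rw [hu_def, ← Complex.exp_nat_mul]
    congr 1
    push_cast
    ring
  have hEc : Complex.exp (c * θ) = u * v * Eβ := by
    rw [hu_def, hv_def, hEβ_def, ← Complex.exp_add, ← Complex.exp_add]
    congr 1
    rw [hc]
    ring
  have hinv : u⁻¹ = Complex.exp (-((θ:ℂ)/2 * Complex.I)) := by
    rw [hu_def, ← Complex.exp_neg]
  have hsinC : Complex.sin ((θ:ℂ)/2) = (u⁻¹ - u) * Complex.I / 2 := by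
    rw [Complex.sin, neg_mul]
    rw [← hinv, ← hu_def]
  have hcosC : Complex.cos ((θ:ℂ)/2) = (u + u⁻¹)/2 := by
    rw [Complex.cos, neg_mul]
    rw [← hinv, ← hu_def]
  set W : ℂ := (((2 * Real.sin (θ/2)) ^ (2*α) : ℝ) : ℂ) with hW_def
  have hrpow : ((((2 * Real.sin (θ/2)) ^ (2*α+1) : ℝ)) : ℂ) = W * ((u⁻¹ - u) * Complex.I) := by
    rw [Real.rpow_add hb, Real.rpow_one]
    push_cast
    rw [hsinC]
    ring
  have hFHw : FHw α β θ = FHC α β * W * (Eβ * Eπ) := by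
    rw [FHw, hW_def, hEβ_def, hEπ_def]
    rw [Complex.ofReal_exp, ← Complex.exp_add]
    congr 2
    push_cast
    ring
  have huc : uc θ = u^2 := by
    rw [uc, ← hz]
    congr 1
    ring
  -- assemble
  rw [hEc, hrpow, hz, hFHw, huc]
  have hcc : ((((2*α+1) * (2 * Real.sin (θ/2)) ^ (2*α) * Real.cos (θ/2) : ℝ)) : ℂ)
      = (2*(α:ℂ)+1) * W * ((u + u⁻¹)/2) := by
    push_cast
    rw [hcosC]
  rw [hcc]
  have hkey := key_ident (α:ℂ) (β:ℂ) (j:ℂ) (FHC α β) W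
    (P.eval (u^2)) (P.derivative.eval (u^2)) u v Eβ Eπ hu
  simp only [Polynomial.eval_add, Polynomial.eval_mul, Polynomial.eval_sub, Polynomial.eval_pow,
    Polynomial.eval_X, Polynomial.eval_C]
  rw [hc]
  rw [← hkey]
  try ring

lemma H_cont (α β : ℝ) (hα : -(1/2:ℝ) < α) (P : Polynomial ℂ) (j : ℕ) :
    Continuous (fun t : ℝ => (Complex.I * FHC α β * Complex.exp ((β:ℂ) * (Real.pi:ℂ))) *
        ((Complex.exp ((((1:ℂ)/2 - j) * Complex.I - β) * t) *
            P.eval (Complex.exp (Complex.I * t))) *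
          (((2 * Real.sin (t/2)) ^ (2*α+1) : ℝ) : ℂ))) := by
  apply continuous_const.mul
  apply Continuous.mul
  · apply Continuous.mul
    · exact Complex.continuous_exp.comp (continuous_const.mul Complex.continuous_ofReal)
    · exact P.continuous.comp
        (Complex.continuous_exp.comp (continuous_const.mul Complex.continuous_ofReal))
  · apply Complex.continuous_ofReal.comp
    apply Continuous.rpow_const
    · exact (continuous_const.mul (Real.continuous_sin.comp (continuous_id.div_const 2)))
    · intro x
      right
      linarith

lemma lad (α β : ℝ) (hα : -(1/2:ℝ) < α) (P : Polynomial ℂ) (j : ℕ)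
    (master : ∀ g : ℝ → ℂ, Continuous g →
      IntervalIntegrable (fun θ => g θ * FHw α β θ) volume 0 (2*Real.pi)) :
    (∫ θ in (0:ℝ)..(2*Real.pi),
      ((Polynomial.X^2 - Polynomial.X) * P.derivative
          + (Polynomial.C ((α:ℂ) + β*Complex.I + 1 - (j:ℕ)) * Polynomial.X
              + Polynomial.C ((α:ℂ) - β*Complex.I + (j:ℕ))) * P).eval (uc θ)
        * (starRingEnd ℂ) (((Polynomial.X:Polynomial ℂ)^j).eval (uc θ)) * FHw α β θ) = 0 := by
  set Q : Polynomial ℂ := (Polynomial.X^2 - Polynomial.X) * P.derivative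
          + (Polynomial.C ((α:ℂ) + β*Complex.I + 1 - (j:ℕ)) * Polynomial.X
              + Polynomial.C ((α:ℂ) - β*Complex.I + (j:ℕ))) * P with hQ
  set f : ℝ → ℂ := fun θ => (Complex.I * Complex.exp (-(j:ℂ) * θ * Complex.I) *
    Q.eval (uc θ)) * FHw α β θ with hf
  have hfint : IntervalIntegrable f volume 0 (2*Real.pi) := by
    apply master
    apply Continuous.mul
    · exact continuous_const.mul
        (Complex.continuous_exp.comp ((continuous_const.mul Complex.continuous_ofReal).mul
          continuous_const))
    · exact Q.continuous.comp (Complex.continuous_exp.comp ((Complex.continuous_ofReal).mul continuous_const))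
  set H : ℝ → ℂ := fun t : ℝ => (Complex.I * FHC α β * Complex.exp ((β:ℂ) * (Real.pi:ℂ))) *
        ((Complex.exp ((((1:ℂ)/2 - j) * Complex.I - β) * t) *
            P.eval (Complex.exp (Complex.I * t))) *
          (((2 * Real.sin (t/2)) ^ (2*α+1) : ℝ) : ℂ)) with hH
  have hint : (∫ θ in (0:ℝ)..(2*Real.pi), f θ) = H (2*Real.pi) - H 0 := by
    apply intervalIntegral.integral_eq_sub_of_hasDeriv_right_of_le
      (by positivity) (H_cont α β hα P j).continuousOn
      (fun θ hθ => (hasDerivAt_H α β P j θ hθ).hasDerivWithinAt) hfint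
  have hz0 : (0:ℝ) ^ (2*α+1) = 0 := Real.zero_rpow (by linarith)
  have hH0 : H 0 = 0 := by
    rw [hH]
    simp [hz0]
  have hH2 : H (2*Real.pi) = 0 := by
    rw [hH]
    simp only
    rw [show ((2*Real.pi)/2) = Real.pi by ring, Real.sin_pi, mul_zero, hz0]
    simp
  rw [hH0, hH2, sub_zero] at hint
  have hptwise : ∀ θ : ℝ,
      Q.eval (uc θ) * (starRingEnd ℂ) (((Polynomial.X:Polynomial ℂ)^j).eval (uc θ)) * FHw α β θ
        = (-Complex.I) * f θ := by
    intro θ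
    have hconj : (starRingEnd ℂ) (((Polynomial.X:Polynomial ℂ)^j).eval (uc θ))
        = Complex.exp (-(j:ℂ) * θ * Complex.I) := by
      rw [Polynomial.eval_pow, Polynomial.eval_X, map_pow]
      rw [uc, ← Complex.exp_conj]
      rw [map_mul, Complex.conj_ofReal, Complex.conj_I]
      rw [← Complex.exp_nat_mul]
      congr 1
      push_cast
      ring
    rw [hconj, hf]
    have : -Complex.I * Complex.I = 1 := by
      rw [neg_mul, Complex.I_mul_I]; ring
    field_simp
    ring_nf
    simp only [Complex.I_sq]
    ring
  calc (∫ θ in (0:ℝ)..(2*Real.pi),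
        Q.eval (uc θ) * (starRingEnd ℂ) (((Polynomial.X:Polynomial ℂ)^j).eval (uc θ)) * FHw α β θ)
      = ∫ θ in (0:ℝ)..(2*Real.pi), (-Complex.I) * f θ := by
        apply intervalIntegral.integral_congr
        intro θ _
        exact hptwise θ
    _ = (-Complex.I) * ∫ θ in (0:ℝ)..(2*Real.pi), f θ := intervalIntegral.integral_const_mul _ _
    _ = 0 := by rw [hint, mul_zero]

section Assembly

variable (α β : ℝ) (hα : -(1/2:ℝ) < α) (φ : ℕ → Polynomial ℂ)
  (hdeg : ∀ n : ℕ, (φ n).degree = n)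
  (hlc : ∀ n : ℕ, ∃ c : ℝ, 0 < c ∧ (φ n).leadingCoeff = (c : ℂ))
  (hON : ∀ m n : ℕ, Inn α β (φ m) (φ n) = if m = n then 1 else 0)

include hdeg hlc hON hα

lemma kC'_conj (n : ℕ) : (starRingEnd ℂ) (kC' φ n) = kC' φ n := by
  obtain ⟨c, -, hc⟩ := hlc n
  rw [kC', hc, Complex.conj_ofReal]

lemma Inn_phi_pow_lt {i j : ℕ} (h : j < i) : Inn α β (φ i) (Polynomial.X ^ j) = 0 := by
  obtain ⟨c, hc⟩ := span_rep hdeg j (Polynomial.X ^ j) (by rw [Polynomial.degree_X_pow])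
  rw [hc, Inn_sum_right α β hα]
  rw [Finset.sum_eq_zero]
  intro l hl
  rw [Inn_Cmul_right, hON i l, if_neg (by have := Finset.mem_range.mp hl; omega), mul_zero]

lemma Inn_phi_pow_self (i : ℕ) : Inn α β (φ i) (Polynomial.X ^ i) = 1 / kC' φ i := by
  obtain ⟨c, hc⟩ := span_rep hdeg i (Polynomial.X ^ i) (by rw [Polynomial.degree_X_pow])
  have htop : c i * kC' φ i = 1 := by
    have := rep_coeff_top hdeg hc
    rw [Polynomial.coeff_X_pow, if_pos rfl] at this
    exact this.symm
  rw [hc, Inn_sum_right α β hα]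
  rw [Finset.sum_eq_single i]
  · rw [Inn_Cmul_right, hON i i, if_pos rfl, mul_one]
    have h1 : (starRingEnd ℂ) (c i) * (starRingEnd ℂ) (kC' φ i) = 1 := by
      rw [← map_mul, htop, map_one]
    rw [kC'_conj α β hα φ hdeg hlc hON] at h1
    have hk := kC'_ne_zero hdeg i
    field_simp
    linear_combination h1
  · intro l hl hne
    rw [Inn_Cmul_right, hON i l, if_neg (fun h => hne h.symm), mul_zero]
  · intro h
    exact absurd (Finset.self_mem_range_succ i) h

end Assembly

lemma Inn_sub_left (α β : ℝ) (hα : -(1/2:ℝ) < α) (p₁ p₂ q : Polynomial ℂ) :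
    Inn α β (p₁ - p₂) q = Inn α β p₁ q - Inn α β p₂ q := by
  unfold Inn
  rw [← intervalIntegral.integral_sub (innInt α β hα p₁ q) (innInt α β hα p₂ q)]
  apply intervalIntegral.integral_congr
  intro θ _
  simp only [Polynomial.eval_sub]
  ring

noncomputable def Gpoly (α β : ℝ) (φ : ℕ → Polynomial ℂ) (n : ℕ) : Polynomial ℂ :=
  (Polynomial.X^2 - Polynomial.X) * (φ n).derivative
    + (Polynomial.C ((α:ℂ) + β*Complex.I + 1) * Polynomial.X
        + Polynomial.C ((α:ℂ) - β*Complex.I)) * φ n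

lemma coeff_sq_sub_mul (p : Polynomial ℂ) (m : ℕ) :
    ((Polynomial.X^2 - Polynomial.X) * p).coeff (m+2) = p.coeff m - p.coeff (m+1) := by
  rw [sub_mul, Polynomial.coeff_sub, Polynomial.coeff_X_pow_mul p 2 m,
    show m + 2 = (m+1) + 1 from rfl, Polynomial.coeff_X_mul]

lemma coeff_lin_mul (a b : ℂ) (p : Polynomial ℂ) (m : ℕ) :
    ((Polynomial.C a * Polynomial.X + Polynomial.C b) * p).coeff (m+1)
      = a * p.coeff m + b * p.coeff (m+1) := by
  rw [add_mul, Polynomial.coeff_add, mul_assoc, Polynomial.coeff_C_mul,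
    Polynomial.coeff_X_mul, Polynomial.coeff_C_mul]

lemma coeff_lin_mul_zero (a b : ℂ) (p : Polynomial ℂ) :
    ((Polynomial.C a * Polynomial.X + Polynomial.C b) * p).coeff 0 = b * p.coeff 0 := by
  rw [add_mul, Polynomial.coeff_add, Polynomial.mul_coeff_zero, Polynomial.mul_coeff_zero,
    Polynomial.mul_coeff_zero]
  simp

section Assembly2

variable {α β : ℝ} {φ : ℕ → Polynomial ℂ}

lemma G_coeff_high (hdeg : ∀ n : ℕ, (φ n).degree = n) (n m : ℕ) (hm : n + 2 ≤ m) :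
    (Gpoly α β φ n).coeff m = 0 := by
  obtain ⟨m', rfl⟩ : ∃ m', m = m' + 2 := ⟨m - 2, by omega⟩
  rw [Gpoly, Polynomial.coeff_add, coeff_sq_sub_mul,
    show m' + 2 = (m'+1)+1 from rfl, coeff_lin_mul]
  rw [Polynomial.coeff_derivative, Polynomial.coeff_derivative]
  rw [coeff_phi_gt hdeg (show n < m'+1 by omega),
    coeff_phi_gt hdeg (show n < m'+1+1 by omega)]
  ring

lemma G_degree (hdeg : ∀ n : ℕ, (φ n).degree = n) (n : ℕ) :
    (Gpoly α β φ n).degree ≤ ((n+1 : ℕ) : WithBot ℕ) := by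
  apply (Polynomial.degree_le_iff_coeff_zero _ _).mpr
  intro m hm
  have : n + 1 < m := by exact_mod_cast hm
  exact G_coeff_high hdeg n m (by omega)

lemma G_coeff_top (hdeg : ∀ n : ℕ, (φ n).degree = n) (n : ℕ) :
    (Gpoly α β φ n).coeff (n+1) = ((n:ℂ) + 1 + (α:ℂ) + (β:ℂ)*Complex.I) * kC' φ n := by
  cases n with
  | zero =>
    have hd : (φ 0).derivative = 0 := by
      rw [Polynomial.eq_C_of_degree_le_zero (le_of_eq (hdeg 0))]
      exact Polynomial.derivative_C
    rw [Gpoly, hd, mul_zero, zero_add, show (0:ℕ)+1 = 0+1 from rfl, coeff_lin_mul]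
    rw [coeff_phi_self hdeg 0, coeff_phi_gt hdeg (by omega)]
    push_cast
    ring
  | succ n' =>
    rw [Gpoly, Polynomial.coeff_add, show n'+1+1 = n'+2 from rfl, coeff_sq_sub_mul,
      show n'+2 = (n'+1)+1 from rfl, coeff_lin_mul]
    rw [Polynomial.coeff_derivative, Polynomial.coeff_derivative]
    rw [coeff_phi_self hdeg (n'+1), coeff_phi_gt hdeg (show n'+1 < n'+1+1 by omega)]
    push_cast
    ring

lemma G_coeff_zero (n : ℕ) :
    (Gpoly α β φ n).coeff 0 = ((α:ℂ) - (β:ℂ)*Complex.I) * (φ n).coeff 0 := by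
  rw [Gpoly, Polynomial.coeff_add, coeff_lin_mul_zero, Polynomial.mul_coeff_zero]
  simp

end Assembly2


section MainId

variable {α β : ℝ} {φ : ℕ → Polynomial ℂ}

lemma main_id (hα : -(1/2:ℝ) < α)
    (hdeg : ∀ n : ℕ, (φ n).degree = n)
    (hlc : ∀ n : ℕ, ∃ c : ℝ, 0 < c ∧ (φ n).leadingCoeff = (c : ℂ))
    (hON : ∀ m n : ℕ, Inn α β (φ m) (φ n) = if m = n then 1 else 0) (n : ℕ) :
    ((α:ℂ) + (β:ℂ)*Complex.I + (n:ℂ) + 1) * kC' φ n * ((φ (n+1)).coeff 0)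
      = ((α:ℂ) - (β:ℂ)*Complex.I + (n:ℂ)) * kC' φ (n+1) * ((φ n).coeff 0) := by
  -- ladder identities
  have hGj : ∀ j : ℕ, Inn α β (Gpoly α β φ n) (Polynomial.X^j)
      = (j:ℂ) * (Inn α β (Polynomial.X * φ n) (Polynomial.X^j)
          - Inn α β (φ n) (Polynomial.X^j)) := by
    intro j
    have hl' : Inn α β ((Polynomial.X^2 - Polynomial.X) * (φ n).derivative
        + (Polynomial.C ((α:ℂ) + β*Complex.I + 1 - (j:ℕ)) * Polynomial.X
            + Polynomial.C ((α:ℂ) - β*Complex.I + (j:ℕ))) * (φ n)) (Polynomial.X^j) = 0 :=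
      lad α β hα (φ n) j (fun g hg => master α β hα g hg)
    have hdecomp : (Polynomial.X^2 - Polynomial.X) * (φ n).derivative
        + (Polynomial.C ((α:ℂ) + β*Complex.I + 1 - (j:ℕ)) * Polynomial.X
            + Polynomial.C ((α:ℂ) - β*Complex.I + (j:ℕ))) * (φ n)
        = Gpoly α β φ n + (Polynomial.C (j:ℂ) * (φ n)
            - Polynomial.C (j:ℂ) * (Polynomial.X * φ n)) := by
      rw [Gpoly, show ((α:ℂ) + β*Complex.I + 1 - (j:ℕ)) = ((α:ℂ) + β*Complex.I + 1) - (j:ℂ)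
          from by push_cast; ring,
        show ((α:ℂ) - β*Complex.I + (j:ℕ)) = ((α:ℂ) - β*Complex.I) + (j:ℂ)
          from by push_cast; ring]
      simp only [map_sub, map_add]
      ring
    rw [hdecomp, Inn_add_left α β hα, Inn_sub_left α β hα,
      Inn_Cmul_left, Inn_Cmul_left] at hl'
    linear_combination hl'
  have hGj2 : ∀ j : ℕ, j ≤ n → Inn α β (Gpoly α β φ n) (Polynomial.X^j)
      = if j = n then -(n:ℂ)/kC' φ n else 0 := by
    intro j hj
    rw [hGj j]
    cases j with
    | zero =>
      rcases eq_or_ne 0 n with h | h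
      · rw [if_pos h, ← h]
        simp
      · rw [if_neg h]
        simp
    | succ j' =>
      rw [Inn_shift α β (φ n) j']
      rw [Inn_phi_pow_lt α β hα φ hdeg hlc hON (show j' < n by omega)]
      rcases eq_or_ne (j'+1) n with he | hne
      · rw [if_pos he, ← he, Inn_phi_pow_self α β hα φ hdeg hlc hON]
        push_cast
        ring
      · rw [if_neg hne, Inn_phi_pow_lt α β hα φ hdeg hlc hON (by omega)]
        simp
  obtain ⟨g, hg⟩ := span_rep hdeg (n+1) (Gpoly α β φ n) (G_degree hdeg n)
  have hGl : ∀ l : ℕ, l ≤ n+1 → Inn α β (Gpoly α β φ n) (φ l) = g l := by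
    intro l hl
    rw [hg, Inn_sum_left α β hα]
    have hterm : ∀ i ∈ Finset.range (n+2),
        Inn α β (Polynomial.C (g i) * φ i) (φ l) = if i = l then g i else 0 := by
      intro i _
      rw [Inn_Cmul_left, hON i l]
      split <;> simp
    rw [Finset.sum_congr rfl hterm, Finset.sum_ite_eq' (Finset.range (n+2)) l g,
      if_pos (Finset.mem_range.mpr (by omega))]
  have hGX : ∀ j : ℕ, j ≤ n+1 → ∃ d : ℕ → ℂ,
      (Inn α β (Gpoly α β φ n) (Polynomial.X^j)
        = ∑ l ∈ Finset.range (j+1), (starRingEnd ℂ) (d l) * g l)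
      ∧ d j * kC' φ j = 1 := by
    intro j hj
    obtain ⟨d, hd⟩ := span_rep hdeg j (Polynomial.X^j) (by rw [Polynomial.degree_X_pow])
    refine ⟨d, ?_, ?_⟩
    · rw [hd, Inn_sum_right α β hα]
      apply Finset.sum_congr rfl
      intro l hl
      rw [Inn_Cmul_right, hGl l (by have := Finset.mem_range.mp hl; omega)]
    · have := rep_coeff_top hdeg hd
      rw [Polynomial.coeff_X_pow, if_pos rfl] at this
      exact this.symm
  have hgzero : ∀ j, j < n → g j = 0 := by
    intro j
    induction j using Nat.strong_induction_on with
    | _ j ih =>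
      intro hjn
      obtain ⟨d, hsum, htop⟩ := hGX j (by omega)
      rw [hGj2 j (by omega), if_neg (by omega)] at hsum
      rw [Finset.sum_range_succ] at hsum
      rw [Finset.sum_eq_zero (fun l hl => by
        rw [ih l (Finset.mem_range.mp hl) (by have := Finset.mem_range.mp hl; omega), mul_zero]),
        zero_add] at hsum
      have hd0 : d j ≠ 0 := by
        intro h
        rw [h, zero_mul] at htop
        exact zero_ne_one htop
      have : (starRingEnd ℂ) (d j) ≠ 0 := by
        simpa using hd0
      field_simp at hsum
      exact (mul_eq_zero.mp hsum.symm).resolve_left this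
  have hgn : g n = -(n:ℂ) := by
    obtain ⟨d, hsum, htop⟩ := hGX n (by omega)
    rw [hGj2 n le_rfl, if_pos rfl] at hsum
    rw [Finset.sum_range_succ] at hsum
    rw [Finset.sum_eq_zero (fun l hl => by
      rw [hgzero l (Finset.mem_range.mp hl), mul_zero]), zero_add] at hsum
    have hkn := kC'_ne_zero hdeg n
    have hdn : (starRingEnd ℂ) (d n) * kC' φ n = 1 := by
      have h1 := congrArg (starRingEnd ℂ) htop
      rw [map_mul, map_one, kC'_conj α β hα φ hdeg hlc hON] at h1
      exact h1
    -- hsum : -(n:ℂ)/kC' φ n = conj (d n) * g n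
    have h2 : -(n:ℂ) = (starRingEnd ℂ) (d n) * g n * kC' φ n := by
      field_simp at hsum
      linear_combination hsum
    rw [show (starRingEnd ℂ) (d n) * g n * kC' φ n
        = g n * ((starRingEnd ℂ) (d n) * kC' φ n) from by ring, hdn, mul_one] at h2
    exact h2.symm
  have hgtop : g (n+1) * kC' φ (n+1) = ((n:ℂ)+1+(α:ℂ)+(β:ℂ)*Complex.I) * kC' φ n := by
    have h1 := rep_coeff_top hdeg hg
    rw [G_coeff_top hdeg] at h1
    exact h1.symm
  have hc0 : ((α:ℂ) - (β:ℂ)*Complex.I) * (φ n).coeff 0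
      = g n * (φ n).coeff 0 + g (n+1) * (φ (n+1)).coeff 0 := by
    have h1 := congrArg (fun p : Polynomial ℂ => p.coeff 0) hg
    simp only [Polynomial.finset_sum_coeff, Polynomial.coeff_C_mul] at h1
    rw [G_coeff_zero] at h1
    rw [Finset.sum_range_succ, Finset.sum_range_succ] at h1
    rw [Finset.sum_eq_zero (fun l hl => by
      rw [hgzero l (Finset.mem_range.mp hl), zero_mul]), zero_add] at h1
    exact h1
  have hkn := kC'_ne_zero hdeg n
  have hkn1 := kC'_ne_zero hdeg (n+1)
  rw [hgn] at hc0
  linear_combination (-(φ (n+1)).coeff 0) * hgtop + (-(kC' φ (n+1))) * hc0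

end MainId


theorem FH_r_recurrence (α β : ℝ) (hα : -(1/2 : ℝ) < α)
    (φ : ℕ → Polynomial ℂ) (hφ : OPS (FHw α β) φ) (n : ℕ) :
    ((α : ℂ) + (β : ℂ) * Complex.I + (n : ℂ) + 1) * kC φ n * (φ (n+1)).coeff 0
      = ((α : ℂ) - (β : ℂ) * Complex.I + (n : ℂ)) * kC φ (n+1) * (φ n).coeff 0 ∧
    rC φ (n+1) * ((α : ℂ) + (β : ℂ) * Complex.I + (n : ℂ) + 1)
      = rC φ n * ((α : ℂ) - (β : ℂ) * Complex.I + (n : ℂ)) := by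
  obtain ⟨hdeg, hlc, hON⟩ := hφ
  have hON' : ∀ m n : ℕ, Inn α β (φ m) (φ n) = if m = n then 1 else 0 := hON
  have h1 := main_id hα hdeg hlc hON' n
  have hk : ∀ m, kC φ m = kC' φ m := fun _ => rfl
  have h1' : ((α : ℂ) + (β : ℂ) * Complex.I + (n : ℂ) + 1) * kC φ n * (φ (n+1)).coeff 0
      = ((α : ℂ) - (β : ℂ) * Complex.I + (n : ℂ)) * kC φ (n+1) * (φ n).coeff 0 := by
    rw [hk, hk]; exact h1
  refine ⟨h1', ?_⟩
  have hkn := kC'_ne_zero hdeg n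
  have hkn1 := kC'_ne_zero hdeg (n+1)
  rw [show rC φ (n+1) = (φ (n+1)).coeff 0 / kC' φ (n+1) from rfl,
    show rC φ n = (φ n).coeff 0 / kC' φ n from rfl]
  field_simp
  linear_combination h1
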